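/- In the group algebra \(\mathbb{Q}\mathfrak{S}_n\), let \(\tau_n = \sum_{k=1}^{n} c_k\) where \(c_k\) is the cycle \((k, k-1, \dots, 2, 1)\) written as the permutation \(k\,1\,2\cdots(k-1)(k+1)\cdots n\) (moving \(k\) to the front). Then the minimal polynomial of right multiplication by \(\tau_n\) on \(\mathbb{Q}\mathfrak{S}_n\) is \(P_n(x) = (x-n)\prod_{k=0}^{n-2}(x-k)\); in particular this operator is diagonalizable with eigenvalues \(\{0,1,\dots,n-2,n\}\). -/

import Mathlib

open Equiv

/-- The Tsetlin library element `τ_n = ∑_{k=1}^n σ_k ∈ ℚ𝔖_n`, where `σ_k` has one-line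
notation `k 1 2 ⋯ k̂ ⋯ n` (0-indexed: `σ_k = (Fin.cycleRange (k-1))⁻¹`, the cycle sending
position `0` to value `k-1` and shifting the first `k-1` values down). -/
noncomputable def tsetlin (n : ℕ) : MonoidAlgebra ℚ (Perm (Fin n)) :=
  ∑ k : Fin n, MonoidAlgebra.of ℚ (Perm (Fin n)) (Fin.cycleRange k)⁻¹

namespace TsetlinAux

open Finset Polynomial

variable {n : ℕ}

/-! ### `cycleRange` value lemmas for general `Fin n` -/

lemma cr_gt {i j : Fin n} (h : i < j) : Fin.cycleRange i j = j := by
  cases n with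
  | zero => exact i.elim0
  | succ m => exact Fin.cycleRange_of_gt h

lemma cr_coe_lt {i j : Fin n} (h : j < i) : (Fin.cycleRange i j : ℕ) = (j : ℕ) + 1 := by
  cases n with
  | zero => exact i.elim0
  | succ m => exact Fin.coe_cycleRange_of_lt h

lemma cr_coe_self (i : Fin n) : (Fin.cycleRange i i : ℕ) = 0 := by
  cases n with
  | zero => exact i.elim0
  | succ m => rw [Fin.cycleRange_self]; rfl

/-! ### The sets `T_i` and elements `A_i` -/

/-- Permutations whose one-line word is strictly increasing from position `i` on. -/
def Tset (n i : ℕ) : Finset (Perm (Fin n)) :=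
  univ.filter fun w => ∀ j k : Fin n, i ≤ (j : ℕ) → j < k → w j < w k

lemma mem_Tset {i : ℕ} {w : Perm (Fin n)} :
    w ∈ Tset n i ↔ ∀ j k : Fin n, i ≤ (j : ℕ) → j < k → w j < w k := by
  simp [Tset]

noncomputable def Ael (n i : ℕ) : MonoidAlgebra ℚ (Perm (Fin n)) :=
  ∑ w ∈ Tset n i, MonoidAlgebra.of ℚ (Perm (Fin n)) w

lemma Ael_apply (i : ℕ) (v : Perm (Fin n)) :
    (Ael n i).coeff v = if v ∈ Tset n i then 1 else 0 := by
  classical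
  rw [Ael, MonoidAlgebra.coeff_sum, Finset.sum_apply']
  simp only [MonoidAlgebra.of_apply, MonoidAlgebra.coeff_single, Finsupp.single_apply]
  rw [Finset.sum_ite_eq']

lemma Tset_congr {i : ℕ} {w w' : Perm (Fin n)}
    (h : ∀ a : Fin n, i ≤ (a : ℕ) → w a = w' a) :
    w ∈ Tset n i ↔ w' ∈ Tset n i := by
  simp only [mem_Tset]
  constructor <;> intro H j k hj hjk
  · have hk : i ≤ (k : ℕ) := le_trans hj (le_of_lt hjk)
    rw [← h j hj, ← h k hk]; exact H j k hj hjk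
  · have hk : i ≤ (k : ℕ) := le_trans hj (le_of_lt hjk)
    rw [h j hj, h k hk]; exact H j k hj hjk

lemma Tset_top (hn : 1 ≤ n) : Tset n (n - 1) = univ := by
  ext w
  simp only [mem_Tset, mem_univ, iff_true]
  intro j k hj hjk
  exact absurd k.isLt (by rw [Fin.lt_def] at hjk; omega)

lemma strictMono_eq_one {w : Perm (Fin n)} (h : StrictMono (w : Fin n → Fin n)) :
    w = 1 := by
  have key : ∀ v : Perm (Fin n), StrictMono (v : Fin n → Fin n) →
      ∀ m : ℕ, ∀ hm : m < n, m ≤ ((v ⟨m, hm⟩ : Fin n) : ℕ) := by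
    intro v hv m
    induction m using Nat.strong_induction_on with
    | _ m IH =>
      intro hmn
      by_contra hcon
      push_neg at hcon
      obtain ⟨fl, hfl⟩ : ∃ z : Fin n, (z : ℕ) = ((v ⟨m, hmn⟩ : Fin n) : ℕ) := ⟨_, rfl⟩
      have h1 : (fl : ℕ) ≤ ((v ⟨(fl : ℕ), by omega⟩ : Fin n) : ℕ) := IH _ (by omega) (by omega)
      have h2 : v ⟨(fl : ℕ), by omega⟩ < v ⟨m, hmn⟩ := hv (by simp only [Fin.lt_def]; omega)
      rw [Fin.lt_def] at h2
      omega
  have hsymm : StrictMono (w.symm : Fin n → Fin n) := by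
    intro a b hab
    rw [← w.apply_symm_apply a, ← w.apply_symm_apply b] at hab
    exact h.lt_iff_lt.1 hab
  apply Equiv.ext
  intro x
  have h1 : (x : ℕ) ≤ ((w x : Fin n) : ℕ) := by
    have := key w h (x : ℕ) x.isLt
    simpa using this
  have h2 : (x : ℕ) ≤ ((w.symm x : Fin n) : ℕ) := by
    have := key w.symm hsymm (x : ℕ) x.isLt
    simpa using this
  have h3 : w x ≤ w (w.symm x) := h.monotone (by rw [Fin.le_def]; exact h2)
  rw [Equiv.apply_symm_apply] at h3
  rw [Fin.le_def] at h3
  exact Fin.ext (by simpa using le_antisymm h3 h1)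

lemma Ael_zero : Ael n 0 = 1 := by
  have h1 : Tset n 0 = {1} := by
    ext w
    simp only [mem_Tset, mem_singleton]
    constructor
    · intro H
      exact strictMono_eq_one fun a b hab => H a b (Nat.zero_le _) hab
    · rintro rfl
      intro j k _ hjk
      simpa using hjk
  rw [Ael, h1, sum_singleton, map_one]

/-! ### The key recursion -/

section count

variable (u : Perm (Fin n)) {i : ℕ}

lemma memT_of_move {k : Fin n} (hk : i ≤ (k : ℕ))
    (hw : u * Fin.cycleRange k ∈ Tset n i) : u ∈ Tset n (i + 1) := by
  rw [mem_Tset] at hw ⊢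
  intro a b ha hab
  have hab' : (a : ℕ) < (b : ℕ) := hab
  have hbn : (b : ℕ) < n := b.isLt
  rcases le_or_gt (b : ℕ) (k : ℕ) with hbk | hbk
  · -- both a,b ≤ k : pull back by one
    obtain ⟨a', ha'⟩ : ∃ a' : Fin n, (a' : ℕ) = (a : ℕ) - 1 := ⟨⟨(a : ℕ) - 1, by omega⟩, rfl⟩
    obtain ⟨b', hb'⟩ : ∃ b' : Fin n, (b' : ℕ) = (b : ℕ) - 1 := ⟨⟨(b : ℕ) - 1, by omega⟩, rfl⟩
    have hca : Fin.cycleRange k a' = a :=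
      Fin.ext (by rw [cr_coe_lt (show a' < k by simp only [Fin.lt_def]; omega)]; omega)
    have hcb : Fin.cycleRange k b' = b :=
      Fin.ext (by rw [cr_coe_lt (show b' < k by simp only [Fin.lt_def]; omega)]; omega)
    have := hw a' b' (by omega) (by simp only [Fin.lt_def]; omega)
    rwa [Perm.mul_apply, Perm.mul_apply, hca, hcb] at this
  · rcases le_or_gt (a : ℕ) (k : ℕ) with hak | hak
    · obtain ⟨a', ha'⟩ : ∃ a' : Fin n, (a' : ℕ) = (a : ℕ) - 1 := ⟨⟨(a : ℕ) - 1, by omega⟩, rfl⟩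
      have hca : Fin.cycleRange k a' = a :=
        Fin.ext (by rw [cr_coe_lt (show a' < k by simp only [Fin.lt_def]; omega)]; omega)
      have hcb : Fin.cycleRange k b = b := cr_gt (by simp only [Fin.lt_def]; omega)
      have := hw a' b (by omega) (by simp only [Fin.lt_def]; omega)
      rwa [Perm.mul_apply, Perm.mul_apply, hca, hcb] at this
    · have hca : Fin.cycleRange k a = a := cr_gt (by simp only [Fin.lt_def]; omega)
      have hcb : Fin.cycleRange k b = b := cr_gt (by simp only [Fin.lt_def]; omega)
      have := hw a b (by omega) hab
      rwa [Perm.mul_apply, Perm.mul_apply, hca, hcb] at this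

lemma move_uniq_aux {k k' : Fin n} (hk : i ≤ (k : ℕ)) (hkk' : k < k')
    (h1 : u * Fin.cycleRange k ∈ Tset n i) (h2 : u * Fin.cycleRange k' ∈ Tset n i) :
    False := by
  have hn0 : 0 < n := k.pos
  have hkk : (k : ℕ) < (k' : ℕ) := hkk'
  have hk'n : (k' : ℕ) < n := k'.isLt
  obtain ⟨z0, hz0⟩ : ∃ z : Fin n, (z : ℕ) = 0 := ⟨⟨0, hn0⟩, rfl⟩
  obtain ⟨k1, hk1⟩ : ∃ z : Fin n, (z : ℕ) = (k : ℕ) + 1 := ⟨⟨(k : ℕ) + 1, by omega⟩, rfl⟩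
  obtain ⟨km, hkm⟩ : ∃ z : Fin n, (z : ℕ) = (k' : ℕ) - 1 := ⟨⟨(k' : ℕ) - 1, by omega⟩, rfl⟩
  -- from h1 : u 0 < u (k+1)
  have e1 : Fin.cycleRange k k = z0 := Fin.ext (by rw [cr_coe_self]; omega)
  have e2 : Fin.cycleRange k k1 = k1 := cr_gt (by simp only [Fin.lt_def]; omega)
  have lt1 : u z0 < u k1 := by
    have := (mem_Tset.1 h1) k k1 hk (by simp only [Fin.lt_def]; omega)
    rwa [Perm.mul_apply, Perm.mul_apply, e1, e2] at this
  -- from h2 : u k' < u 0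
  have e3 : Fin.cycleRange k' km = k' :=
    Fin.ext (by rw [cr_coe_lt (show km < k' by simp only [Fin.lt_def]; omega)]; omega)
  have e4 : Fin.cycleRange k' k' = z0 := Fin.ext (by rw [cr_coe_self]; omega)
  have lt2 : u k' < u z0 := by
    have := (mem_Tset.1 h2) km k' (by omega) (by simp only [Fin.lt_def]; omega)
    rwa [Perm.mul_apply, Perm.mul_apply, e3, e4] at this
  -- monotonicity of tail of u
  have hu1 : u ∈ Tset n (i + 1) := memT_of_move u hk h1
  have le3 : u k1 ≤ u k' := by
    rcases eq_or_lt_of_le (show (k1 : ℕ) ≤ (k' : ℕ) by omega) with he | hlt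
    · exact le_of_eq (congrArg u (Fin.ext he))
    · exact le_of_lt ((mem_Tset.1 hu1) k1 k' (by omega) (by simp only [Fin.lt_def]; omega))
  exact absurd (lt1.trans_le (le3.trans lt2.le)) (lt_irrefl _)

lemma move_exists (hi : i + 2 ≤ n) (hu : u ∈ Tset n (i + 1)) :
    ∃ k : Fin n, i ≤ (k : ℕ) ∧ u * Fin.cycleRange k ∈ Tset n i := by
  classical
  have hn0 : 0 < n := by omega
  obtain ⟨z0, hz0⟩ : ∃ z : Fin n, (z : ℕ) = 0 := ⟨⟨0, hn0⟩, rfl⟩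
  obtain ⟨fi, hfi⟩ : ∃ z : Fin n, (z : ℕ) = i := ⟨⟨i, by omega⟩, rfl⟩
  set F : Finset (Fin n) :=
    insert fi (univ.filter fun a : Fin n => i + 1 ≤ (a : ℕ) ∧ u a < u z0) with hF
  have hFne : F.Nonempty := insert_nonempty _ _
  set ks : Fin n := F.max' hFne with hks
  have hks_ge : i ≤ (ks : ℕ) := by
    have := F.le_max' fi (mem_insert_self _ _)
    rw [Fin.le_def] at this
    omega
  have hks_mem : ks ∈ F := F.max'_mem hFne
  have hgt : ∀ a : Fin n, ks < a → u z0 < u a := by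
    intro a hka
    have hka' : (ks : ℕ) < (a : ℕ) := hka
    have hna : a ∉ F := fun hmem => absurd (F.le_max' a hmem) (not_le.mpr hka)
    have h1 : i + 1 ≤ (a : ℕ) := by omega
    have h2 : ¬u a < u z0 := fun hlt =>
      hna (by rw [hF]; exact mem_insert_of_mem (mem_filter.2 ⟨mem_univ _, h1, hlt⟩))
    have hne : u z0 ≠ u a := by
      intro he
      have h0a : z0 = a := u.injective he
      have : (z0 : ℕ) = (a : ℕ) := congrArg Fin.val h0a
      omega
    exact lt_of_le_of_ne (not_lt.mp h2) hne
  have hlt_mem : i < (ks : ℕ) → u ks < u z0 := by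
    intro hik
    rcases mem_insert.1 hks_mem with he | hf
    · have : (ks : ℕ) = (fi : ℕ) := congrArg Fin.val he
      omega
    · exact (mem_filter.1 hf).2.2
  refine ⟨ks, hks_ge, ?_⟩
  rw [mem_Tset]
  intro a b ha hab
  have hab' : (a : ℕ) < (b : ℕ) := hab
  rw [Perm.mul_apply, Perm.mul_apply]
  have hu' := mem_Tset.1 hu
  -- helper: u (cycleRange ks x) < u 0 when i ≤ x < ks
  have hmid : ∀ x : Fin n, i ≤ (x : ℕ) → x < ks → u (Fin.cycleRange ks x) < u z0 := by
    intro x hx hxk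
    have hxk' : (x : ℕ) < (ks : ℕ) := hxk
    have hxv : (Fin.cycleRange ks x : ℕ) = (x : ℕ) + 1 := cr_coe_lt hxk
    rcases eq_or_lt_of_le (show ((Fin.cycleRange ks x : Fin n) : ℕ) ≤ (ks : ℕ) by omega)
      with he | hlt
    · rw [Fin.ext he]
      exact hlt_mem (by omega)
    · exact lt_trans (hu' _ ks (by omega) (by simp only [Fin.lt_def]; omega))
        (hlt_mem (by omega))
  rcases lt_trichotomy b ks with hbk | hbk | hbk
  · have hak : a < ks := lt_trans hab hbk
    have hav : (Fin.cycleRange ks a : ℕ) = (a : ℕ) + 1 := cr_coe_lt hak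
    have hbv : (Fin.cycleRange ks b : ℕ) = (b : ℕ) + 1 := cr_coe_lt hbk
    exact hu' _ _ (by omega) (by simp only [Fin.lt_def]; omega)
  · subst hbk
    have hck : Fin.cycleRange ks ks = z0 := Fin.ext (by rw [cr_coe_self]; omega)
    rw [hck]
    exact hmid a ha hab
  · have hcb : Fin.cycleRange ks b = b := cr_gt hbk
    rw [hcb]
    rcases lt_trichotomy a ks with hak | hak | hak
    · exact lt_trans (hmid a ha hak) (hgt b hbk)
    · subst hak
      have hca : Fin.cycleRange ks ks = z0 := Fin.ext (by rw [cr_coe_self]; omega)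
      rw [hca]
      exact hgt b hbk
    · have hca : Fin.cycleRange ks a = a := cr_gt hak
      rw [hca]
      have hak' : (ks : ℕ) < (a : ℕ) := hak
      exact hu' a b (by omega) hab

lemma count_ge (hi : i + 2 ≤ n) :
    (univ.filter fun k : Fin n => i ≤ (k : ℕ) ∧ u * Fin.cycleRange k ∈ Tset n i).card
      = if u ∈ Tset n (i + 1) then 1 else 0 := by
  split_ifs with hu
  · obtain ⟨k0, hk0i, hk0⟩ := move_exists u hi hu
    rw [card_eq_one]
    refine ⟨k0, ?_⟩
    ext k
    simp only [mem_filter, mem_univ, true_and, mem_singleton]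
    constructor
    · rintro ⟨h1, h2⟩
      rcases lt_trichotomy k k0 with h | h | h
      · exact (move_uniq_aux u h1 h h2 hk0).elim
      · exact h
      · exact (move_uniq_aux u hk0i h hk0 h2).elim
    · rintro rfl
      exact ⟨hk0i, hk0⟩
  · rw [card_eq_zero, Finset.filter_eq_empty_iff]
    rintro k - ⟨h1, h2⟩
    exact hu (memT_of_move u h1 h2)

lemma count_lt (hi : i + 2 ≤ n) :
    (univ.filter fun k : Fin n => (k : ℕ) < i ∧ u * Fin.cycleRange k ∈ Tset n i).card
      = if u ∈ Tset n i then i else 0 := by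
  have hiff : ∀ k : Fin n, (k : ℕ) < i →
      (u * Fin.cycleRange k ∈ Tset n i ↔ u ∈ Tset n i) := by
    intro k hk
    apply Tset_congr
    intro a ha
    rw [Perm.mul_apply, cr_gt (show k < a by simp only [Fin.lt_def]; omega)]
  split_ifs with hu
  · have he : (univ.filter fun k : Fin n => (k : ℕ) < i ∧ u * Fin.cycleRange k ∈ Tset n i)
        = univ.filter fun k : Fin n => (k : ℕ) < i := by
      apply filter_congr
      intro k _
      simp only [and_iff_left_iff_imp]
      intro hk
      exact (hiff k hk).2 hu
    rw [he]
    have he2 : (univ.filter fun k : Fin n => (k : ℕ) < i)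
        = Finset.Iio (⟨i, by omega⟩ : Fin n) := by
      ext k
      simp [Fin.lt_def]
    rw [he2, Fin.card_Iio]
  · rw [card_eq_zero, Finset.filter_eq_empty_iff]
    rintro k - ⟨h1, h2⟩
    exact hu ((hiff k h1).1 h2)

lemma count_total (hi : i + 2 ≤ n) :
    ((univ : Finset (Fin n)).filter fun k => u * Fin.cycleRange k ∈ Tset n i).card
      = (if u ∈ Tset n i then i else 0) + if u ∈ Tset n (i + 1) then 1 else 0 := by
  classical
  rw [← count_lt u hi, ← count_ge u hi]
  rw [← card_union_of_disjoint (by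
    rw [Finset.disjoint_left]
    rintro a ha hb
    simp only [mem_filter] at ha hb
    omega)]
  congr 1
  ext k
  simp only [mem_filter, mem_univ, true_and, mem_union]
  constructor
  · intro h
    rcases lt_or_ge (k : ℕ) i with hk | hk
    · exact Or.inl ⟨hk, h⟩
    · exact Or.inr ⟨hk, h⟩
  · rintro (⟨-, h⟩ | ⟨-, h⟩) <;> exact h

end count

lemma key {i : ℕ} (hi : i + 2 ≤ n) :
    Ael n i * tsetlin n = (i : ℚ) • Ael n i + Ael n (i + 1) := by
  classical
  apply MonoidAlgebra.ext
  ext u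
  rw [tsetlin, Finset.mul_sum, MonoidAlgebra.coeff_sum, Finset.sum_apply']
  have hterm : ∀ k : Fin n,
      (Ael n i * MonoidAlgebra.of ℚ (Perm (Fin n)) (Fin.cycleRange k)⁻¹).coeff u
        = if u * Fin.cycleRange k ∈ Tset n i then (1 : ℚ) else 0 := by
    intro k
    rw [MonoidAlgebra.of_apply, MonoidAlgebra.coeff_mul_single_apply, inv_inv, Ael_apply, mul_one]
  rw [Finset.sum_congr rfl fun k _ => hterm k, Finset.sum_boole]
  rw [count_total u hi]
  rw [MonoidAlgebra.coeff_add, MonoidAlgebra.coeff_smul, Finsupp.add_apply, Finsupp.smul_apply, Ael_apply, Ael_apply]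
  push_cast
  split_ifs <;> simp

lemma top_mul (hn : 1 ≤ n) :
    Ael n (n - 1) * tsetlin n = (n : ℚ) • Ael n (n - 1) := by
  classical
  apply MonoidAlgebra.ext
  ext u
  rw [tsetlin, Finset.mul_sum, MonoidAlgebra.coeff_sum, Finset.sum_apply']
  have hterm : ∀ k : Fin n,
      (Ael n (n - 1) * MonoidAlgebra.of ℚ (Perm (Fin n)) (Fin.cycleRange k)⁻¹).coeff u
        = (1 : ℚ) := by
    intro k
    rw [MonoidAlgebra.of_apply, MonoidAlgebra.coeff_mul_single_apply, inv_inv, Ael_apply, mul_one,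
      Tset_top hn, if_pos (mem_univ _)]
  rw [Finset.sum_congr rfl fun k _ => hterm k]
  rw [MonoidAlgebra.coeff_smul, Finsupp.smul_apply, Ael_apply, Tset_top hn, if_pos (mem_univ _)]
  simp

/-! ### `A_i` as a polynomial in `τ` -/

lemma aeval_q (hn : 1 ≤ n) :
    ∀ i, i ≤ n - 1 → aeval (tsetlin n) (∏ j ∈ range i, (X - C (j : ℚ))) = Ael n i := by
  intro i
  induction i with
  | zero => intro _; rw [range_zero, prod_empty, map_one, Ael_zero]
  | succ i ih =>
    intro hi
    rw [prod_range_succ, map_mul, ih (by omega), map_sub, aeval_X, aeval_C]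
    rw [mul_sub, Algebra.algebraMap_eq_smul_one, mul_smul_comm, mul_one]
    rw [key (by omega)]
    abel

/-! ### Witness permutations and linear independence -/

/-- Witness permutation with one-line word `1 2 ⋯ d 0 (d+1) ⋯`. -/
def uperm (n d : ℕ) : Perm (Fin n) :=
  if h : d < n then Fin.cycleRange ⟨d, h⟩ else 1

lemma uperm_mem {d i : ℕ} (hd : d < n) : uperm n d ∈ Tset n i ↔ d ≤ i := by
  rw [uperm, dif_pos hd, mem_Tset]
  obtain ⟨fd, hfd⟩ : ∃ z : Fin n, (z : ℕ) = d := ⟨⟨d, hd⟩, rfl⟩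
  have hfd' : (⟨d, hd⟩ : Fin n) = fd := Fin.ext (by rw [hfd])
  rw [hfd']
  constructor
  · intro H
    by_contra hlt
    push_neg at hlt
    obtain ⟨fe, hfe⟩ : ∃ z : Fin n, (z : ℕ) = d - 1 := ⟨⟨d - 1, by omega⟩, rfl⟩
    have := H fe fd (by omega) (by simp only [Fin.lt_def]; omega)
    have hj : (Fin.cycleRange fd fe : ℕ) = d := by
      rw [cr_coe_lt (show fe < fd by simp only [Fin.lt_def]; omega)]; omega
    have hk : (Fin.cycleRange fd fd : ℕ) = 0 := cr_coe_self _
    rw [Fin.lt_def, hj, hk] at this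
    omega
  · intro hdi j k hj hjk
    have hjk' : (j : ℕ) < (k : ℕ) := hjk
    rcases eq_or_lt_of_le (show d ≤ (j : ℕ) by omega) with he | hlt
    · have hj0 : (Fin.cycleRange fd j : ℕ) = 0 := by
        have hfj : fd = j := Fin.ext (by omega)
        rw [hfj, cr_coe_self]
      have hk0 : Fin.cycleRange fd k = k :=
        cr_gt (by simp only [Fin.lt_def]; omega)
      rw [Fin.lt_def, hj0, hk0]
      omega
    · have hj0 : Fin.cycleRange fd j = j :=
        cr_gt (by simp only [Fin.lt_def]; omega)
      have hk0 : Fin.cycleRange fd k = k :=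
        cr_gt (by simp only [Fin.lt_def]; omega)
      rw [hj0, hk0, Fin.lt_def]
      exact hjk'

/-! ### Every polynomial of low degree in `τ` expands in the `A_i` -/

lemma span' (hn : 1 ≤ n) :
    ∀ e, e ≤ n - 1 → ∀ p : ℚ[X], p.natDegree ≤ e →
      ∃ c : ℕ → ℚ, c e = p.coeff e ∧
        aeval (tsetlin n) p = ∑ j ∈ range (e + 1), c j • Ael n j := by
  intro e
  induction e with
  | zero =>
    intro _ p hp
    refine ⟨fun _ => p.coeff 0, rfl, ?_⟩
    have hpc : p = C (p.coeff 0) := Polynomial.eq_C_of_natDegree_le_zero hp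
    rw [Finset.sum_range_one, Ael_zero]
    nth_rewrite 1 [hpc]
    rw [aeval_C, Algebra.algebraMap_eq_smul_one]
  | succ e ih =>
    intro he p hp
    set q : ℚ[X] := ∏ j ∈ range (e + 1), (X - C (j : ℚ)) with hq
    have hqm : q.Monic := monic_prod_of_monic _ _ fun _ _ => monic_X_sub_C _
    have hqdeg : q.natDegree = e + 1 := by
      rw [hq, natDegree_prod_of_monic _ _ fun _ _ => monic_X_sub_C _]
      simp only [natDegree_X_sub_C, Finset.sum_const, Finset.card_range, smul_eq_mul, mul_one]
    set t : ℚ := p.coeff (e + 1) with ht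
    set r : ℚ[X] := p - C t * q with hr
    have hrdeg : r.natDegree ≤ e := by
      rw [natDegree_le_iff_coeff_eq_zero]
      intro m hm
      rw [hr, coeff_sub, coeff_C_mul]
      rcases eq_or_lt_of_le (show e + 1 ≤ m by omega) with hme | hme
      · rw [← hme, ← hqdeg, hqm.coeff_natDegree, hqdeg, ← ht, mul_one, sub_self]
      · rw [coeff_eq_zero_of_natDegree_lt (by omega),
          coeff_eq_zero_of_natDegree_lt (by omega), mul_zero, sub_self]
    obtain ⟨c, hc, hsum⟩ := ih (by omega) r hrdeg
    refine ⟨Function.update c (e + 1) t, by simp, ?_⟩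
    have hpr : p = r + C t * q := by rw [hr]; ring
    rw [hpr, map_add, map_mul, aeval_C, hsum, hq, aeval_q hn (e + 1) he]
    conv_rhs => rw [Finset.sum_range_succ, Function.update_self]
    congr 1
    · apply Finset.sum_congr rfl
      intro j hj
      rw [Function.update_of_ne (by rw [mem_range] at hj; omega)]
    · rw [Algebra.algebraMap_eq_smul_one, smul_mul_assoc, one_mul]

/-! ### Transfer through `mulRight` -/

lemma aeval_mulRight {A : Type*} [Ring A] [Algebra ℚ A] (a : A) (p : ℚ[X]) :
    aeval (LinearMap.mulRight ℚ a) p = LinearMap.mulRight ℚ (aeval a p) := by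
  induction p using Polynomial.induction_on' with
  | add p q hp hq =>
    rw [map_add, map_add, hp, hq]
    ext x
    simp [mul_add]
  | monomial k c =>
    rw [aeval_monomial, aeval_monomial, LinearMap.pow_mulRight]
    ext x
    simp only [Module.End.mul_apply, LinearMap.mulRight_apply, Module.algebraMap_end_apply,
      Algebra.algebraMap_eq_smul_one, smul_mul_assoc, one_mul, mul_smul_comm,
      LinearMap.smul_apply]

end TsetlinAux

open Polynomial TsetlinAux Finset in
/-- The minimal polynomial of right multiplication by `τ_n` on `ℚ𝔖_n` is
`(x-n) ∏_{k=0}^{n-2} (x-k)`; in particular this operator is diagonalizable with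
eigenvalues `{0,1,…,n-2,n}`. -/
theorem stmt_7 (n : ℕ) (hn : 2 ≤ n) :
    minpoly ℚ
        (LinearMap.mulRight ℚ (tsetlin n) :
          Module.End ℚ (MonoidAlgebra ℚ (Perm (Fin n)))) =
      (X - C (n : ℚ)) * ∏ k ∈ Finset.range (n - 1), (X - C (k : ℚ)) := by
  classical
  have hn1 : 1 ≤ n := by omega
  have hPm : ((X - C (n : ℚ)) * ∏ k ∈ Finset.range (n - 1), (X - C (k : ℚ))).Monic :=
    (monic_X_sub_C _).mul (monic_prod_of_monic _ _ fun _ _ => monic_X_sub_C _)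
  have hPdeg : ((X - C (n : ℚ)) * ∏ k ∈ Finset.range (n - 1), (X - C (k : ℚ))).natDegree = n := by
    rw [natDegree_mul (X_sub_C_ne_zero _)
      (monic_prod_of_monic _ _ fun _ _ => monic_X_sub_C _).ne_zero,
      natDegree_X_sub_C, natDegree_prod_of_monic _ _ fun _ _ => monic_X_sub_C _]
    simp only [natDegree_X_sub_C, Finset.sum_const, card_range, smul_eq_mul, mul_one]
    omega
  -- τ is annihilated by P
  have haτ : aeval (tsetlin n) ((X - C (n : ℚ)) * ∏ k ∈ Finset.range (n - 1), (X - C (k : ℚ)))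
      = 0 := by
    rw [mul_comm, map_mul, aeval_q hn1 (n - 1) le_rfl, map_sub, aeval_X, aeval_C]
    rw [mul_sub, Algebra.algebraMap_eq_smul_one, mul_smul_comm, mul_one]
    rw [top_mul hn1, sub_self]
  have haT : aeval (LinearMap.mulRight ℚ (tsetlin n) :
        Module.End ℚ (MonoidAlgebra ℚ (Perm (Fin n))))
      ((X - C (n : ℚ)) * ∏ k ∈ Finset.range (n - 1), (X - C (k : ℚ))) = 0 := by
    rw [aeval_mulRight, haτ]
    ext x
    simp
  have hTint : IsIntegral ℚ (LinearMap.mulRight ℚ (tsetlin n) :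
      Module.End ℚ (MonoidAlgebra ℚ (Perm (Fin n)))) :=
    ⟨_, hPm, by rwa [← aeval_def]⟩
  have hdvd := minpoly.dvd ℚ _ haT
  have hmm : (minpoly ℚ (LinearMap.mulRight ℚ (tsetlin n) :
      Module.End ℚ (MonoidAlgebra ℚ (Perm (Fin n))))).Monic := minpoly.monic hTint
  have hdeg_le : (minpoly ℚ (LinearMap.mulRight ℚ (tsetlin n) :
      Module.End ℚ (MonoidAlgebra ℚ (Perm (Fin n))))).natDegree ≤ n :=
    le_of_le_of_eq (natDegree_le_of_dvd hdvd hPm.ne_zero) hPdeg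
  -- the minimal polynomial has degree at least n
  have hdeg_ge : n ≤ (minpoly ℚ (LinearMap.mulRight ℚ (tsetlin n) :
      Module.End ℚ (MonoidAlgebra ℚ (Perm (Fin n))))).natDegree := by
    by_contra hlt
    push_neg at hlt
    set m : ℚ[X] := minpoly ℚ (LinearMap.mulRight ℚ (tsetlin n) :
      Module.End ℚ (MonoidAlgebra ℚ (Perm (Fin n)))) with hm
    have haτm : aeval (tsetlin n) m = 0 := by
      have h0 : aeval (LinearMap.mulRight ℚ (tsetlin n) :
          Module.End ℚ (MonoidAlgebra ℚ (Perm (Fin n)))) m = 0 := minpoly.aeval ℚ _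
      rw [aeval_mulRight] at h0
      have := congrArg (fun f => f (1 : MonoidAlgebra ℚ (Perm (Fin n)))) h0
      simpa using this
    obtain ⟨c, hc, hsum⟩ := span' hn1 m.natDegree (by omega) m le_rfl
    rw [haτm] at hsum
    have hdn : m.natDegree < n := hlt
    have := congrArg (fun x : MonoidAlgebra ℚ (Perm (Fin n)) => x.coeff (uperm n m.natDegree)) hsum
    try simp only at this
    rw [MonoidAlgebra.coeff_sum, Finset.sum_apply'] at this
    have hz : ∀ j ∈ range (m.natDegree + 1),
        (c j • Ael n j).coeff (uperm n m.natDegree) = if j = m.natDegree then c j else 0 := by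
      intro j hj
      rw [mem_range] at hj
      rw [MonoidAlgebra.coeff_smul, Finsupp.smul_apply, Ael_apply]
      simp only [uperm_mem hdn]
      split_ifs with h1 h2 h2 <;> first | (exfalso; omega) | (simp)
    rw [Finset.sum_congr rfl hz,
      Finset.sum_ite_eq' (range (m.natDegree + 1)) m.natDegree c,
      if_pos (by rw [mem_range]; omega)] at this
    rw [hc, hmm.coeff_natDegree] at this
    simpa using this.symm
  -- conclude
  obtain ⟨k, hk⟩ := hdvd
  have hk0 : k ≠ 0 := by
    intro h
    rw [h, mul_zero] at hk
    exact hPm.ne_zero hk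
  have hkdeg : k.natDegree = 0 := by
    have h2 := natDegree_mul hmm.ne_zero hk0
    rw [← hk, hPdeg] at h2
    omega
  have hkc : k = C (k.coeff 0) := Polynomial.eq_C_of_natDegree_le_zero (by omega)
  have hlead : k.coeff 0 = 1 := by
    have h3 := congrArg leadingCoeff hk
    rw [hPm.leadingCoeff, leadingCoeff_mul, hmm.leadingCoeff, one_mul, hkc] at h3
    simpa using h3.symm
  rw [hk, hkc, hlead, map_one, mul_one]
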